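/- If M is a finitely generated commutative monoid in which every element belongs to a subgroup (i.e., M is completely regular), then the set of idempotent elements of M is finite. -/

import Mathlib

/-- `T` is a subgroup of a semigroup/monoid (as a subset). -/
def IsSubgroupSet {S : Type*} [Mul S] (T : Set S) : Prop :=
  (∀ a ∈ T, ∀ b ∈ T, a * b ∈ T) ∧
  ∃ e ∈ T, (∀ a ∈ T, e * a = a ∧ a * e = a) ∧ (∀ a ∈ T, ∃ b ∈ T, a * b = e ∧ b * a = e)

/-- An element belongs to a subgroup of the monoid. -/
def MemSubgroup {M : Type*} [Monoid M] (a : M) : Prop :=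
  ∃ T : Set M, IsSubgroupSet T ∧ a ∈ T

theorem idempotents_finite_of_fg_completely_regular {M : Type*} [CommMonoid M]
    (hfg : ∃ S : Finset M, Submonoid.closure (S : Set M) = ⊤)
    (hreg : ∀ a : M, MemSubgroup a) :
    {a : M | a * a = a}.Finite := by
  classical
  obtain ⟨S, hS⟩ := hfg
  have key : ∀ a : M, ∃ e : M, (e * e = e ∧ e * a = a) ∧ ∃ b, a * b = e := by
    intro a
    obtain ⟨T, ⟨hmul, e, heT, hid, hinv⟩, haT⟩ := hreg a
    obtain ⟨b, hbT, hab, _⟩ := hinv a haT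
    exact ⟨e, ⟨(hid e heT).1, (hid a haT).1⟩, b, hab⟩
  choose φ hφ using key
  have uniq : ∀ a e f : M, e * a = a → (∃ b, a * b = e) →
      f * a = a → (∃ c, a * c = f) → e = f := by
    rintro a e f hea ⟨b, hb⟩ hfa ⟨c, hc⟩
    have h1 : e * f = e := by
      rw [← hb, mul_comm (a * b) f, ← mul_assoc, hfa]
    have h2 : f * e = f := by
      rw [← hc, mul_comm (a * c) e, ← mul_assoc, hea]
    rw [← h1, mul_comm, h2]
  have φidem : ∀ a, φ a * φ a = φ a := fun a => (hφ a).1.1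
  have φabs : ∀ a, φ a * a = a := fun a => (hφ a).1.2
  have φone : φ 1 = 1 := uniq 1 (φ 1) 1 (φabs 1) (hφ 1).2 (one_mul 1) ⟨1, one_mul 1⟩
  have φmul : ∀ x y, φ (x * y) = φ x * φ y := by
    intro x y
    refine uniq (x * y) _ _ (φabs _) (hφ _).2 ?_ ?_
    · rw [mul_mul_mul_comm, φabs, φabs]
    · obtain ⟨b, hb⟩ := (hφ x).2
      obtain ⟨c, hc⟩ := (hφ y).2
      exact ⟨b * c, by rw [mul_mul_mul_comm, hb, hc]⟩
  have φfix : ∀ a : M, a * a = a → φ a = a := by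
    intro a ha
    exact uniq a (φ a) a (φabs a) (hφ a).2 ha ⟨a, ha⟩
  set F : M →* M := ⟨⟨φ, φone⟩, φmul⟩ with hF
  -- every idempotent lies in the closure of φ '' S
  have hmem : ∀ a : M, a * a = a → a ∈ Submonoid.closure (↑(S.image φ) : Set M) := by
    intro a ha
    have : a ∈ Submonoid.closure (S : Set M) := hS ▸ Submonoid.mem_top a
    have h2 : φ a ∈ (Submonoid.closure (S : Set M)).map F :=
      Submonoid.mem_map_of_mem F this
    rw [MonoidHom.map_mclosure] at h2
    rw [← φfix a ha]
    simpa [Finset.coe_image, hF] using h2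
  -- elements of that closure are products over subsets of S.image φ
  have idemT : ∀ x ∈ S.image φ, x * x = x := by
    intro x hx
    obtain ⟨s, _, rfl⟩ := Finset.mem_image.mp hx
    exact φidem s
  have prodidem : ∀ t : Finset M, (∀ x ∈ t, x * x = x) →
      t.prod id * t.prod id = t.prod id := by
    intro t ht
    rw [← Finset.prod_mul_distrib]
    exact Finset.prod_congr rfl fun x hx => ht x hx
  have absorb : ∀ u v : Finset M, u ⊆ v → (∀ x ∈ v, x * x = x) →
      v.prod id * u.prod id = v.prod id := by
    intro u v huv hv
    have h := Finset.prod_sdiff (f := id) huv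
    rw [← h, mul_assoc, prodidem u (fun x hx => hv x (huv hx))]
  have hclos : ∀ x ∈ Submonoid.closure (↑(S.image φ) : Set M),
      ∃ t ∈ (S.image φ).powerset, t.prod id = x := by
    intro x hx
    induction hx using Submonoid.closure_induction with
    | mem y hy =>
      exact ⟨{y}, Finset.mem_powerset.mpr (Finset.singleton_subset_iff.mpr (by exact_mod_cast hy)),
        by simp⟩
    | one => exact ⟨∅, Finset.mem_powerset.mpr (Finset.empty_subset _), by simp⟩
    | mul y z hy hz ihy ihz =>
      obtain ⟨t, ht, rfl⟩ := ihy
      obtain ⟨u, hu, rfl⟩ := ihz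
      refine ⟨t ∪ u, Finset.mem_powerset.mpr
        (Finset.union_subset (Finset.mem_powerset.mp ht) (Finset.mem_powerset.mp hu)), ?_⟩
      have htS := Finset.mem_powerset.mp ht
      have huS := Finset.mem_powerset.mp hu
      have hidem : ∀ x ∈ t ∪ u, x * x = x := fun x hx =>
        idemT x ((Finset.union_subset htS huS) hx)
      have := Finset.prod_union_inter (f := id) (s₁ := t) (s₂ := u)
      rw [← this, absorb (t ∩ u) (t ∪ u) (Finset.inter_subset_union) hidem]
  refine Set.Finite.subset (((S.image φ).powerset.image (fun t => t.prod id)).finite_toSet) ?_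
  intro a ha
  obtain ⟨t, ht, hteq⟩ := hclos a (hmem a ha)
  exact Finset.mem_coe.mpr (Finset.mem_image.mpr ⟨t, ht, hteq⟩)
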